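/- Let F be an algebraically closed field and α₈ ∈ F nonzero. For any split octonion of the form (0, 0; c, δ) and any positive integer k, there exists Y ∈ O(F) such that (0, 0; c, δ) = (0, 0; 0, α₈)·Y^k. -/

import Mathlib

/-- Zorn vector matrices: the split octonion algebra over `F`. -/
structure Oct (F : Type*) where
  a : F              -- upper-left scalar η
  b : Fin 3 → F      -- upper-right vector x
  c : Fin 3 → F      -- lower-left vector y
  d : F              -- lower-right scalar ζ

namespace Oct

variable {F : Type*} [Field F]

/-- standard bilinear form on F^3 -/
def dot (x y : Fin 3 → F) : F := x 0 * y 0 + x 1 * y 1 + x 2 * y 2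

/-- cross product on F^3, satisfying ⟨x ∧ y, z⟩ = det(x,y,z) -/
def cross (x y : Fin 3 → F) : Fin 3 → F :=
  ![x 1 * y 2 - x 2 * y 1, x 2 * y 0 - x 0 * y 2, x 0 * y 1 - x 1 * y 0]

instance : Add (Oct F) :=
  ⟨fun A B => ⟨A.a + B.a, A.b + B.b, A.c + B.c, A.d + B.d⟩⟩

instance : Mul (Oct F) :=
  ⟨fun A B =>
    ⟨A.a * B.a + dot A.b B.c,
     A.a • B.b + B.d • A.b + cross A.c B.c,
     A.d • B.c + B.a • A.c + cross A.b B.b,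
     A.d * B.d + dot A.c B.b⟩⟩

instance : SMul F (Oct F) :=
  ⟨fun t A => ⟨t * A.a, t • A.b, t • A.c, t * A.d⟩⟩

instance : One (Oct F) := ⟨⟨1, 0, 0, 1⟩⟩

/-- powers, via A^{n+1} = A · A^n (well-defined by power-associativity) -/
def pow (A : Oct F) : ℕ → Oct F
  | 0 => 1
  | n + 1 => A * pow A n

/-- octonion conjugation -/
def conj (A : Oct F) : Oct F := ⟨A.d, -A.b, -A.c, A.a⟩

/-- the norm form -/
def norm (A : Oct F) : F := A.a * A.d - dot A.b A.c

lemma mul_def (A B : Oct F) : A * B =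
    ⟨A.a * B.a + dot A.b B.c,
     A.a • B.b + B.d • A.b + cross A.c B.c,
     A.d • B.c + B.a • A.c + cross A.b B.b,
     A.d * B.d + dot A.c B.b⟩ := rfl

lemma dot_zero_left (y : Fin 3 → F) : dot (0 : Fin 3 → F) y = 0 := by
  simp [dot]

lemma cross_zero_left (y : Fin 3 → F) : cross (0 : Fin 3 → F) y = 0 := by
  funext i; fin_cases i <;> simp [cross]

lemma cross_zero_right (y : Fin 3 → F) : cross y (0 : Fin 3 → F) = 0 := by
  funext i; fin_cases i <;> simp [cross]

lemma cross_self (y : Fin 3 → F) : cross y y = 0 := by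
  funext i; fin_cases i <;> simp [cross] <;> ring

lemma cross_smul_right (d : F) (x y : Fin 3 → F) : cross x (d • y) = d • cross x y := by
  funext i; fin_cases i <;> simp [cross] <;> ring

/-- powers of a lower-triangular element -/
lemma pow_diag (c' : Fin 3 → F) (d : F) (n : ℕ) :
    pow (⟨0, 0, c', d⟩ : Oct F) (n + 1) = ⟨0, 0, d ^ n • c', d ^ (n + 1)⟩ := by
  induction n with
  | zero =>
    show (⟨0, 0, c', d⟩ : Oct F) * (1 : Oct F) = _
    show (⟨0, 0, c', d⟩ : Oct F) * (⟨1, 0, 0, 1⟩ : Oct F) = _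
    rw [mul_def]
    simp [dot, cross_zero_left, cross_zero_right]
  | succ n ih =>
    show (⟨0, 0, c', d⟩ : Oct F) * pow _ (n + 1) = _
    rw [ih, mul_def]
    simp [dot_zero_left, cross_zero_left, cross_smul_right, Oct.cross_self, smul_smul, dot,
      pow_succ]
    refine ⟨?_, by ring⟩
    rw [mul_comm]

lemma mul_one' (Y : Oct F) : Y * (1 : Oct F) = Y := by
  show Y * (⟨1, 0, 0, 1⟩ : Oct F) = Y
  rw [mul_def]
  simp [dot, cross_zero_left, cross_zero_right]

/-- powers of an idempotent -/
lemma pow_idem (Y : Oct F) (h : Y * Y = Y) (k : ℕ) (hk : 1 ≤ k) : pow Y k = Y := by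
  induction k with
  | zero => omega
  | succ n ih =>
    rcases Nat.eq_zero_or_pos n with h1 | h1
    · subst h1
      show Y * pow Y 0 = Y
      show Y * (1 : Oct F) = Y
      exact mul_one' Y
    · show Y * pow Y n = Y
      rw [ih h1, h]

end Oct

open Oct
theorem stmt_6 {F : Type*} [Field F] [IsAlgClosed F] (α₈ : F) (hα₈ : α₈ ≠ 0)
    (δ : F) (c : Fin 3 → F) (k : ℕ) (hk : 1 ≤ k) :
    ∃ Y : Oct F, (⟨0, 0, c, δ⟩ : Oct F) = (⟨0, 0, 0, α₈⟩ : Oct F) * pow Y k := by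
  by_cases hδ : δ = 0
  · -- idempotent case
    refine ⟨⟨1, 0, α₈⁻¹ • c, 0⟩, ?_⟩
    have hidem : (⟨1, 0, α₈⁻¹ • c, 0⟩ : Oct F) * ⟨1, 0, α₈⁻¹ • c, 0⟩ =
        ⟨1, 0, α₈⁻¹ • c, 0⟩ := by
      rw [mul_def]
      simp [dot_zero_left, cross_zero_left, Oct.cross_self, dot]
    rw [pow_idem _ hidem k hk, mul_def]
    simp [dot_zero_left, cross_zero_left, dot, hδ, smul_smul, mul_inv_cancel₀ hα₈]
  · obtain ⟨d, hd⟩ := IsAlgClosed.exists_pow_nat_eq (δ / α₈) (n := k) (by omega)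
    have hdne : d ≠ 0 := by
      intro h0
      rw [h0, zero_pow (by omega)] at hd
      exact hδ (by field_simp at hd; simpa using hd.symm)
    obtain ⟨n, rfl⟩ : ∃ n, k = n + 1 := ⟨k - 1, by omega⟩
    refine ⟨⟨0, 0, (α₈ * d ^ n)⁻¹ • c, d⟩, ?_⟩
    rw [pow_diag, mul_def]
    simp [dot_zero_left, cross_zero_left, dot, smul_smul]
    constructor
    · funext i
      simp [Pi.smul_apply, smul_eq_mul]
      field_simp
    · field_simp at hd
      linear_combination -hd
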